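/- Let U_θ be the time evolution matrix of the quantum walk on the mixed cycle C_n^j equipped with the η-function θ. Then for every arc a of C_n^j, U_θ^n e_a = e^{εjη i} e_a where ε ∈ {+1,-1} depends only on the orientation class of a (arcs traversing the cycle in one direction pick up e^{ijη}, in the other e^{-ijη}). Consequently, if η ∉ ℚπ and j ≥ 1 then U_θ^m ≠ I for all m ≥ 1, while if η = (p/q)π then U_θ^{2qn} = I. -/

import Mathlib

open Matrix

/-- Arcs of the mixed cycle `C_n^j`: `(k, true)` goes from vertex `k` to
`k+1 (mod n)` (directed, with phase `η`, iff `k < j`); `(k, false)` is its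
inverse. -/
def cycT (n : ℕ) (a : Fin n × Bool) : Fin n :=
  if a.2 then ⟨(a.1.val + 1) % n, Nat.mod_lt _ (by have := a.1.isLt; omega)⟩
  else a.1

def cycInv (n : ℕ) (a : Fin n × Bool) : Fin n × Bool := (a.1, !a.2)

/-- The η-function of `C_n^j`: `η` on forward directed arcs, `-η` on their
inverses, `0` on bidirectional arcs. -/
def cycTheta (n j : ℕ) (η : ℝ) (a : Fin n × Bool) : ℝ :=
  if a.1.val < j then (if a.2 then η else -η) else 0

/-- Boundary operator (the cycle is 2-regular, so all degrees are 2). -/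
noncomputable def cycK (n : ℕ) : Matrix (Fin n) (Fin n × Bool) ℂ :=
  fun x a => if x = cycT n a then ((Real.sqrt 2 : ℂ))⁻¹ else 0

noncomputable def cycC (n : ℕ) : Matrix (Fin n × Bool) (Fin n × Bool) ℂ :=
  2 • ((cycK n)ᴴ * cycK n) - 1

noncomputable def cycS (n j : ℕ) (η : ℝ) :
    Matrix (Fin n × Bool) (Fin n × Bool) ℂ :=
  fun a b => if a = cycInv n b then Complex.exp ((cycTheta n j η b : ℂ) * Complex.I)
    else 0

noncomputable def cycU (n j : ℕ) (η : ℝ) :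
    Matrix (Fin n × Bool) (Fin n × Bool) ℂ :=
  cycS n j η * cycC n

-- aux
def stp (n : ℕ) [NeZero n] (a : Fin n × Bool) : Fin n × Bool :=
  if a.2 then (a.1 + 1, true) else (a.1 - 1, false)

noncomputable def ang (n j : ℕ) [NeZero n] (η : ℝ) (a : Fin n × Bool) : ℝ :=
  cycTheta n j η ((stp n a).1, !a.2)

lemma cycT_apply (n : ℕ) [NeZero n] (a : Fin n × Bool) :
    cycT n a = if a.2 then a.1 + 1 else a.1 := by
  obtain ⟨k, b⟩ := a
  cases b
  · simp [cycT]
  · simp only [cycT, if_pos]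
    apply Fin.ext
    simp only [Fin.add_def, Fin.val_one']
    rw [Nat.add_mod k.val 1 n, Nat.add_mod k.val (1 % n) n, Nat.mod_mod_of_dvd 1 dvd_rfl]

lemma cycC_apply (n : ℕ) (b a : Fin n × Bool) :
    cycC n b a = (if cycT n b = cycT n a then 1 else 0) - (if b = a then 1 else 0) := by
  have hKK : ((cycK n)ᴴ * cycK n) b a = if cycT n b = cycT n a then (2 : ℂ)⁻¹ else 0 := by
    simp only [Matrix.mul_apply, conjTranspose_apply, cycK]
    rw [Finset.sum_eq_single (cycT n b)]
    · by_cases h : cycT n b = cycT n a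
      · have h2 : ((Real.sqrt 2 : ℂ))⁻¹ * ((Real.sqrt 2 : ℂ))⁻¹ = (2 : ℂ)⁻¹ := by
          rw [← mul_inv]
          norm_cast
          rw [Real.mul_self_sqrt (by norm_num : (0:ℝ) ≤ 2)]
          norm_num
        simp [h, h2]
      · simp [h]
    · intro x _ hx
      rw [if_neg hx, star_zero, zero_mul]
    · simp
  simp only [cycC, Matrix.sub_apply, Matrix.smul_apply, hKK, Matrix.one_apply]
  by_cases h : cycT n b = cycT n a <;> simp [h]

lemma cycU_apply (n j : ℕ) (η : ℝ) (x a : Fin n × Bool) :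
    cycU n j η x a = Complex.exp ((cycTheta n j η (cycInv n x) : ℂ) * Complex.I) *
      ((if cycT n (cycInv n x) = cycT n a then 1 else 0) -
        (if cycInv n x = a then 1 else 0)) := by
  have hinv : ∀ b : Fin n × Bool, (x = cycInv n b) = (b = cycInv n x) := by
    intro b; obtain ⟨k, c⟩ := b; obtain ⟨k', c'⟩ := x
    simp only [cycInv, Prod.mk.injEq, eq_iff_iff]
    cases c <;> cases c' <;> simp [eq_comm]
  simp only [cycU, Matrix.mul_apply, cycS, hinv]
  rw [Finset.sum_eq_single (cycInv n x)]
  · rw [if_pos rfl, cycC_apply]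
  · intro b _ hb; rw [if_neg hb, zero_mul]
  · simp

lemma cycInv_invol (n : ℕ) (a : Fin n × Bool) : cycInv n (cycInv n a) = a := by
  simp [cycInv]

lemma stp_snd (n : ℕ) [NeZero n] (a : Fin n × Bool) : (stp n a).2 = a.2 := by
  obtain ⟨k, b⟩ := a; cases b <;> simp [stp]

lemma cycT_eq_iff (n : ℕ) [NeZero n] (b a : Fin n × Bool) :
    cycT n b = cycT n a ↔ b = a ∨ b = cycInv n (stp n a) := by
  obtain ⟨l, c⟩ := b; obtain ⟨k, d⟩ := a
  cases c <;> cases d <;>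
    simp [cycT_apply, cycInv, stp, Prod.ext_iff, eq_sub_iff_add_eq, sub_add_cancel,
      add_left_inj, eq_comm]

lemma cycT_inv_stp (n : ℕ) [NeZero n] (a : Fin n × Bool) :
    cycT n (cycInv n (stp n a)) = cycT n a := by
  rw [cycT_eq_iff]; right; rfl

lemma step_one (n j : ℕ) [NeZero n] (η : ℝ) (a : Fin n × Bool) :
    (cycU n j η).mulVec (Pi.single a 1) =
      Complex.exp ((ang n j η a : ℂ) * Complex.I) •
        (Pi.single (stp n a) 1 : Fin n × Bool → ℂ) := by
  rw [Matrix.mulVec_single]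
  funext x
  rw [Pi.smul_apply, Pi.smul_apply, Pi.single_apply, op_smul_eq_mul, mul_one, Matrix.col_apply,
    cycU_apply]
  by_cases hx : x = stp n a
  · subst hx
    have h1 : cycInv n (stp n a) ≠ a := by
      intro h
      have := congrArg Prod.snd h
      simp [cycInv, stp_snd] at this
    have h2 : cycInv n (stp n a) = ((stp n a).1, !a.2) := by
      simp [cycInv, stp_snd]
    rw [if_pos rfl, cycT_inv_stp, if_pos rfl, if_neg h1, h2]
    simp [ang, smul_eq_mul]
  · rw [if_neg hx]
    have hA : (cycT n (cycInv n x) = cycT n a) ↔ (cycInv n x = a) := by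
      rw [cycT_eq_iff]
      constructor
      · rintro (h | h)
        · exact h
        · exact absurd (by rw [← cycInv_invol n x, h, cycInv_invol] : x = stp n a) hx
      · exact Or.inl
    by_cases h : cycInv n x = a
    · rw [if_pos (hA.mpr h), if_pos h]; simp
    · rw [if_neg (fun hh => h (hA.mp hh)), if_neg h]; simp

lemma pow_mulVec (n j : ℕ) [NeZero n] (η : ℝ) (m : ℕ) (a : Fin n × Bool) :
    (cycU n j η ^ m).mulVec (Pi.single a 1) =
      Complex.exp (((∑ i ∈ Finset.range m, ang n j η ((stp n)^[i] a)) : ℝ) * Complex.I) •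
        (Pi.single ((stp n)^[m] a) 1 : Fin n × Bool → ℂ) := by
  induction m generalizing a with
  | zero => simp; funext i; simp [Matrix.one_apply, Pi.single_apply]
  | succ m ih =>
    rw [pow_succ, ← Matrix.mulVec_mulVec, step_one, Matrix.mulVec_smul, ih (stp n a),
      smul_smul, ← Complex.exp_add]
    congr 2
    rw [Finset.sum_range_succ']
    push_cast
    simp only [Function.iterate_succ_apply, Function.iterate_zero_apply]
    ring

open Fin.CommRing in
lemma stp_iter (n : ℕ) [NeZero n] (k : Fin n) (b : Bool) (m : ℕ) :
    (stp n)^[m] (k, b) = (if b then k + (m : Fin n) else k - (m : Fin n), b) := by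
  induction m with
  | zero => simp
  | succ m ih =>
    rw [Function.iterate_succ_apply', ih]
    cases b <;> simp [stp, Nat.cast_succ] <;> ring

open Fin.CommRing in
lemma stp_iter_self (n : ℕ) [NeZero n] (a : Fin n × Bool) : (stp n)^[n] a = a := by
  obtain ⟨k, b⟩ := a
  rw [stp_iter]
  cases b <;> simp

lemma sum_indicator (n j : ℕ) (hj : j ≤ n) (c : ℝ) :
    ∑ i ∈ Finset.range n, (if i < j then c else 0) = j * c := by
  rw [Finset.range_eq_Ico, ← Finset.sum_Ico_consecutive _ (Nat.zero_le j) hj]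
  rw [Finset.sum_congr rfl (fun i hi => if_pos (Finset.mem_Ico.mp hi).2),
    Finset.sum_congr rfl (fun i hi => if_neg (by have := (Finset.mem_Ico.mp hi).1; omega)),
    Finset.sum_const, Finset.sum_const_zero]
  simp [Nat.card_Ico, mul_comm]

open Fin.CommRing in
lemma sum_ang (n j : ℕ) [NeZero n] (hj : j ≤ n) (η : ℝ) (a : Fin n × Bool) :
    ∑ i ∈ Finset.range n, ang n j η ((stp n)^[i] a) =
      (if a.2 then (-1 : ℝ) else 1) * j * η := by
  obtain ⟨k, b⟩ := a
  cases b
  · -- backward arcs: ang ((l, false)) = if (l-1).val < j then η else 0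
    have hterm : ∀ l : Fin n, ang n j η (l, false) =
        (if (l - 1 : Fin n).val < j then η else 0) := by
      intro l; simp [ang, stp, cycTheta]
    calc ∑ i ∈ Finset.range n, ang n j η ((stp n)^[i] (k, false))
        = ∑ i ∈ Finset.range n, (if ((k - (i : Fin n) - 1 : Fin n)).val < j then η else 0) := by
          refine Finset.sum_congr rfl fun i _ => ?_
          rw [stp_iter, if_neg (by simp), hterm]
      _ = ∑ v : Fin n, (if ((k - v - 1 : Fin n)).val < j then η else 0) := by
          rw [← Fin.sum_univ_eq_sum_range (fun i => if ((k - (i : Fin n) - 1 : Fin n)).val < j then η else 0) n]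
          exact Finset.sum_congr rfl fun v _ => by simp [Fin.cast_val_eq_self]
      _ = ∑ v : Fin n, (if v.val < j then η else 0) := by
          refine Fintype.sum_equiv ((Equiv.neg (Fin n)).trans (Equiv.addLeft (k - 1))) _ _ fun v => ?_
          simp only [Equiv.trans_apply, Equiv.neg_apply, Equiv.coe_addLeft]
          have h : k - 1 + -v = k - v - 1 := by ring
          simp [h]
      _ = ∑ i ∈ Finset.range n, (if i < j then η else 0) := by
          rw [← Fin.sum_univ_eq_sum_range (fun i => if i < j then η else 0) n]
      _ = (j : ℝ) * η := sum_indicator n j hj η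
      _ = _ := by norm_num
  · -- forward arcs: ang ((l, true)) = if (l+1).val < j then -η else 0
    have hterm : ∀ l : Fin n, ang n j η (l, true) =
        (if (l + 1 : Fin n).val < j then -η else 0) := by
      intro l; simp [ang, stp, cycTheta]
    calc ∑ i ∈ Finset.range n, ang n j η ((stp n)^[i] (k, true))
        = ∑ i ∈ Finset.range n, (if ((k + (i : Fin n) + 1 : Fin n)).val < j then -η else 0) := by
          refine Finset.sum_congr rfl fun i _ => ?_
          rw [stp_iter, if_pos rfl, hterm]
      _ = ∑ v : Fin n, (if ((k + v + 1 : Fin n)).val < j then -η else 0) := by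
          rw [← Fin.sum_univ_eq_sum_range (fun i => if ((k + (i : Fin n) + 1 : Fin n)).val < j then -η else 0) n]
          exact Finset.sum_congr rfl fun v _ => by simp [Fin.cast_val_eq_self]
      _ = ∑ v : Fin n, (if v.val < j then -η else 0) := by
          refine Fintype.sum_equiv (Equiv.addLeft (k + 1)) _ _ fun v => ?_
          simp only [Equiv.coe_addLeft]
          have h : k + 1 + v = k + v + 1 := by ring
          simp [h]
      _ = ∑ i ∈ Finset.range n, (if i < j then -η else 0) := by
          rw [← Fin.sum_univ_eq_sum_range (fun i => if i < j then -η else 0) n]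
      _ = (j : ℝ) * (-η) := sum_indicator n j hj (-η)
      _ = _ := by norm_num

lemma eigen_pow {N : Type*} [Fintype N] [DecidableEq N] (M : Matrix N N ℂ) (v : N → ℂ) (c : ℂ)
    (h : M.mulVec v = c • v) (t : ℕ) : (M ^ t).mulVec v = c ^ t • v := by
  induction t with
  | zero => simp
  | succ t ih =>
    rw [pow_succ, ← Matrix.mulVec_mulVec, h, Matrix.mulVec_smul, ih, smul_smul, ← pow_succ']


/-- On the mixed cycle `C_n^j`: `U_θ^n e_a = e^{±ijη} e_a` (sign depending only
on the orientation class of `a`); hence if `η ∉ ℚπ` and `j ≥ 1` the walk is not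
periodic, while if `η = (p/q)π` then `U_θ^{2qn} = I`. -/
theorem stmt_19 (n j : ℕ) (hn : 3 ≤ n) (hj : j ≤ n) (η : ℝ) :
    (∀ a : Fin n × Bool, (cycU n j η ^ n).mulVec (Pi.single a 1) =
      Complex.exp (((if a.2 then (-1 : ℝ) else 1) * j * η : ℝ) * Complex.I) •
        (Pi.single a 1 : Fin n × Bool → ℂ)) ∧
    ((∀ r : ℚ, η ≠ (r : ℝ) * Real.pi) → 1 ≤ j →
      ∀ m : ℕ, 1 ≤ m → cycU n j η ^ m ≠ 1) ∧
    (∀ p : ℤ, ∀ q : ℕ, 1 ≤ q → η = ((p : ℝ) / (q : ℝ)) * Real.pi →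
      cycU n j η ^ (2 * q * n) = 1) := by
  haveI : NeZero n := ⟨by omega⟩
  have hP : ∀ a : Fin n × Bool, (cycU n j η ^ n).mulVec (Pi.single a 1) =
      Complex.exp (((if a.2 then (-1 : ℝ) else 1) * j * η : ℝ) * Complex.I) •
        (Pi.single a 1 : Fin n × Bool → ℂ) := by
    intro a
    rw [pow_mulVec, sum_ang n j hj η a, stp_iter_self]
  refine ⟨hP, ?_, ?_⟩
  · intro hη hj1 m hm heq
    have h2 : ((cycU n j η) ^ n) ^ m = 1 := by
      rw [← pow_mul, mul_comm, pow_mul, heq, one_pow]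
    have h3 := eigen_pow _ _ _ (hP ((0 : Fin n), true)) m
    rw [h2] at h3
    have h4 : Complex.exp ((((-1:ℝ)) * j * η : ℝ) * Complex.I) ^ m = 1 := by
      have := congrFun h3 ((0 : Fin n), true)
      simpa [Matrix.one_mulVec, Pi.single_apply] using this.symm
    have h5 : Complex.exp ((m : ℂ) * ((((-1:ℝ)) * j * η : ℝ) * Complex.I)) = 1 := by
      rw [Complex.exp_nat_mul, h4]
    rw [Complex.exp_eq_one_iff] at h5
    obtain ⟨z, hz⟩ := h5
    have hre : (m : ℝ) * ((-1) * j * η) = z * (2 * Real.pi) := by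
      rw [show ((m:ℂ) * ((((-1:ℝ)) * j * η : ℝ) * Complex.I)) =
            ((((m : ℝ) * ((-1) * j * η) : ℝ)) : ℂ) * Complex.I from by push_cast; ring,
          show ((z:ℂ) * (2 * (Real.pi:ℂ) * Complex.I)) =
            ((((z : ℝ) * (2 * Real.pi) : ℝ)) : ℂ) * Complex.I from by push_cast; ring] at hz
      exact_mod_cast mul_right_cancel₀ Complex.I_ne_zero hz
    apply hη ((-2 * z) / ((m : ℚ) * j))
    have hmj : ((m : ℝ) * j) ≠ 0 := by
      have : (0:ℝ) < (m:ℝ) * j := by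
        have h1 : (0:ℝ) < m := by exact_mod_cast hm
        have h2 : (0:ℝ) < j := by exact_mod_cast hj1
        positivity
      linarith
    push_cast
    rw [div_mul_eq_mul_div, eq_div_iff hmj]
    linear_combination -hre
  · intro p q hq hη
    have hq0 : ((q:ℝ)) ≠ 0 := Nat.cast_ne_zero.mpr (by omega)
    have key : ∀ a : Fin n × Bool, (cycU n j η ^ (2*q*n)).mulVec (Pi.single a 1) =
        (Pi.single a 1 : Fin n × Bool → ℂ) := by
      intro a
      rw [show 2*q*n = n*(2*q) from by ring, pow_mul, eigen_pow _ _ _ (hP a) (2*q)]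
      have hc : Complex.exp (((if a.2 then (-1:ℝ) else 1) * j * η : ℝ) * Complex.I)
          ^ (2*q) = 1 := by
        rw [← Complex.exp_nat_mul]
        by_cases hb : a.2
        · rw [show ((2*q : ℕ) : ℂ) * ((((if a.2 then (-1:ℝ) else 1) * j * η : ℝ)) * Complex.I)
              = ((-(j*p) : ℤ) : ℂ) * (2 * Real.pi * Complex.I) from by
            subst hη; simp only [hb, if_true]; push_cast
            have hq0' : ((q:ℂ)) ≠ 0 := by exact_mod_cast hq0
            field_simp]
          exact Complex.exp_int_mul_two_pi_mul_I _
        · rw [show ((2*q : ℕ) : ℂ) * ((((if a.2 then (-1:ℝ) else 1) * j * η : ℝ)) * Complex.I)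
              = (((j*p) : ℤ) : ℂ) * (2 * Real.pi * Complex.I) from by
            subst hη; simp only [hb, if_false]; push_cast
            have hq0' : ((q:ℂ)) ≠ 0 := by exact_mod_cast hq0
            field_simp]
          exact Complex.exp_int_mul_two_pi_mul_I _
      rw [hc, one_smul]
    ext x a
    have := congrFun (key a) x
    rw [Matrix.mulVec_single] at this
    simpa [Matrix.one_apply, Pi.single_apply] using this
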